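/- arXiv:1308.5279 — 3 statements merged into one kernel-verified Lean document; each statement's English description precedes it below -/
import Mathlib

section
/- The complex-antilinear map j₁ on ℂ^{2^m} defined on the basis u(ε₁,…,ε_m) by j₁ u(ε₁,…,ε_m) = (√(-1))^{Σ_{α=1}^m (m-α+1) ε_α} u(-ε₁,…,-ε_m) satisfies j₁ ∘ j₁ = (-1)^{m(m+1)/2} · Id, and moreover j₀ ∘ j₁ = j₁ ∘ j₀, where j₀ is the antilinear map with j₀ u(ε₁,…,ε_m) = (√(-1))^{Σ α ε_α} u(-ε₁,…,-ε_m). -/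
open Complex

/-- `u(ε) = (1/√2)(1, -ε i) ∈ ℂ²`. -/
noncomputable def uVec (ε : ℝ) : Fin 2 → ℂ :=
  ![(Real.sqrt 2 : ℂ)⁻¹, -(ε : ℂ) * Complex.I * (Real.sqrt 2 : ℂ)⁻¹]

/-- `u(ε₁, …, ε_m) = u(ε₁) ⊗ ⋯ ⊗ u(ε_m)`, realized in the coordinate model
`ℂ^{2^m} = EuclideanSpace ℂ (Fin m → Fin 2)` of the `m`-fold tensor power of `ℂ²`,
where a sign pattern is encoded by `ε : Fin m → Bool` (`true ↦ +1`, `false ↦ -1`). -/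
noncomputable def uTensor (m : ℕ) (ε : Fin m → Bool) :
    EuclideanSpace ℂ (Fin m → Fin 2) :=
  WithLp.toLp 2 (fun k => ∏ i : Fin m, uVec (if ε i then 1 else -1) (k i))


lemma boolSum (a a' : Fin 2) :
    (∑ b : Bool, (starRingEnd ℂ) (uVec (if b then 1 else -1) a) * uVec (if b then 1 else -1) a')
      = if a = a' then 1 else 0 := by
  have h2 : ((Real.sqrt 2 : ℂ))^2 = 2 := by
    norm_cast
    exact_mod_cast Real.sq_sqrt (by norm_num)
  have hne : (Real.sqrt 2 : ℂ) ≠ 0 := by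
    intro h
    rw [h] at h2; norm_num at h2
  rw [Fintype.sum_bool]
  fin_cases a <;> fin_cases a' <;>
    simp [uVec, map_inv₀, Complex.conj_ofReal, map_mul] <;>
    field_simp <;> ring_nf <;>
    first | (simp [Complex.I_sq]; linear_combination 2*h2) | linear_combination 2*h2 | exact h2.symm | linear_combination (-2:ℂ) * Complex.I_sq - h2

lemma single_eq_sum (m : ℕ) (k : Fin m → Fin 2) :
    (EuclideanSpace.single k (1:ℂ)) =
      ∑ ε : Fin m → Bool,
        (∏ i : Fin m, (starRingEnd ℂ) (uVec (if ε i then 1 else -1) (k i))) • uTensor m ε := by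
  apply PiLp.ext
  intro k'
  have hrhs : (∑ ε : Fin m → Bool,
      (∏ i : Fin m, (starRingEnd ℂ) (uVec (if ε i then 1 else -1) (k i))) • uTensor m ε) k'
      = ∑ ε : Fin m → Bool,
        ∏ i : Fin m, (starRingEnd ℂ) (uVec (if ε i then 1 else -1) (k i)) * uVec (if ε i then 1 else -1) (k' i) := by
    rw [WithLp.ofLp_sum, Finset.sum_apply]
    refine Finset.sum_congr rfl fun ε _ => ?_
    rw [PiLp.smul_apply, smul_eq_mul, uTensor, PiLp.toLp_apply, ← Finset.prod_mul_distrib]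
  rw [hrhs, ← Fintype.piFinset_univ, ← Finset.prod_univ_sum (fun _ => (Finset.univ : Finset Bool))
      (fun i b => (starRingEnd ℂ) (uVec (if b then 1 else -1) (k i)) * uVec (if b then 1 else -1) (k' i))]
  simp only [boolSum]
  rw [Finset.prod_boole, EuclideanSpace.single_apply]
  simp [funext_iff, eq_comm]

lemma span_top (m : ℕ) :
    Submodule.span ℂ (Set.range (uTensor m)) = ⊤ := by
  rw [eq_top_iff]
  intro x _
  have hx : x = ∑ k : Fin m → Fin 2, x k • EuclideanSpace.single k (1:ℂ) := by
    apply PiLp.ext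
    intro k'
    rw [WithLp.ofLp_sum, Finset.sum_apply]
    simp [EuclideanSpace.single_apply]
  rw [hx]
  refine Submodule.sum_mem _ fun k _ => Submodule.smul_mem _ _ ?_
  rw [single_eq_sum]
  exact Submodule.sum_mem _ fun ε _ => Submodule.smul_mem _ _
    (Submodule.subset_span ⟨ε, rfl⟩)

lemma flip_sum (m : ℕ) (w : Fin m → ℤ) (ε : Fin m → Bool) :
    (∑ α : Fin m, w α * (if !(ε α) then 1 else -1))
      = -∑ α : Fin m, w α * (if ε α then 1 else -1) := by
  rw [← Finset.sum_neg_distrib]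
  refine Finset.sum_congr rfl fun α _ => ?_
  cases ε α <;> simp

lemma conj_I_zpow (s : ℤ) : (starRingEnd ℂ) (Complex.I ^ s) = Complex.I ^ (-s) := by
  rw [map_zpow₀, Complex.conj_I, zpow_neg, ← Complex.inv_I, inv_zpow]

lemma neg_one_zpow_parity (a u : ℤ) : (-1 : ℂ) ^ (a + 2 * u) = (-1 : ℂ) ^ a := by
  rw [zpow_add₀ (by norm_num : (-1:ℂ) ≠ 0), zpow_mul]
  norm_num

lemma sum_coeff (m : ℕ) : (∑ α : Fin m, ((m:ℤ) - (α:ℤ))) = (m * (m+1) / 2 : ℕ) := by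
  induction m with
  | zero => simp
  | succ n ih =>
    rw [Fin.sum_univ_castSucc]
    simp only [Fin.coe_castSucc, Fin.val_last]
    push_cast
    have h1 : (∑ α : Fin n, ((n:ℤ) + 1 - (α:ℤ)))
        = ∑ α : Fin n, (1 + ((n:ℤ) - (α:ℤ))) :=
      Finset.sum_congr rfl fun α _ => by ring
    rw [h1, Finset.sum_add_distrib, ih]
    simp only [Finset.sum_const, Finset.card_univ, Fintype.card_fin, nsmul_eq_mul, mul_one]
    have e1 : ((n:ℤ)+1)*((n:ℤ)+1+1) = ((n*(n+1) : ℕ) : ℤ) + 2*((n:ℤ)+1) := by push_cast; ring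
    have e2 : 2 ∣ n*(n+1) := (Nat.even_mul_succ_self n).two_dvd
    have e3 : ((n*(n+1) : ℕ) : ℤ) = (n:ℤ)*((n:ℤ)+1) := by push_cast; ring
    push_cast
    omega

lemma coeff1 (m : ℕ) (ε : Fin m → Bool) :
    Complex.I ^ (-(∑ α : Fin m, ((m:ℤ) - (α:ℤ)) * (if ε α then 1 else -1))) *
      Complex.I ^ (-(∑ α : Fin m, ((m:ℤ) - (α:ℤ)) * (if ε α then 1 else -1)))
      = (-1 : ℂ) ^ (m * (m+1) / 2) := by
  set s : ℤ := ∑ α : Fin m, ((m:ℤ) - (α:ℤ)) * (if ε α then 1 else -1) with hs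
  have h1 : Complex.I ^ (-s) * Complex.I ^ (-s) = ((-1:ℂ)) ^ (-s) := by
    rw [← zpow_add₀ Complex.I_ne_zero]
    rw [show -s + -s = 2 * (-s) by ring, zpow_mul,
      show Complex.I ^ (2:ℤ) = -1 by rw [zpow_two, Complex.I_mul_I]]
  have h2 : -s = ((m * (m+1) / 2 : ℕ) : ℤ)
      + 2 * ∑ α : Fin m, (if ε α then -((m:ℤ) - (α:ℤ)) else 0) := by
    rw [← sum_coeff m, hs, ← Finset.sum_neg_distrib, Finset.mul_sum, ← Finset.sum_add_distrib]
    refine Finset.sum_congr rfl fun α _ => ?_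
    cases ε α <;> simp <;> ring
  rw [h1, h2, neg_one_zpow_parity, zpow_natCast]


/-- The complex-antilinear map `j₁` with
`j₁ u(ε₁,…,ε_m) = i^{Σ (m-α+1) ε_α} u(-ε₁,…,-ε_m)` satisfies
`j₁ ∘ j₁ = (-1)^{m(m+1)/2}·Id`, and `j₀ ∘ j₁ = j₁ ∘ j₀`. -/
theorem j1_squared_and_commutes_with_j0 (m : ℕ) (hm : 1 ≤ m)
    (j0 j1 : EuclideanSpace ℂ (Fin m → Fin 2) → EuclideanSpace ℂ (Fin m → Fin 2))
    (hadd0 : ∀ x y, j0 (x + y) = j0 x + j0 y)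
    (hconj0 : ∀ (c : ℂ) x, j0 (c • x) = (starRingEnd ℂ c) • j0 x)
    (hbasis0 : ∀ ε : Fin m → Bool,
      j0 (uTensor m ε) =
        (Complex.I ^ (∑ α : Fin m, ((α : ℤ) + 1) * (if ε α then 1 else -1))) •
          uTensor m (fun α => !(ε α)))
    (hadd1 : ∀ x y, j1 (x + y) = j1 x + j1 y)
    (hconj1 : ∀ (c : ℂ) x, j1 (c • x) = (starRingEnd ℂ c) • j1 x)
    (hbasis1 : ∀ ε : Fin m → Bool,
      j1 (uTensor m ε) =
        (Complex.I ^ (∑ α : Fin m, ((m : ℤ) - (α : ℤ)) * (if ε α then 1 else -1))) •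
          uTensor m (fun α => !(ε α))) :
    (∀ x, j1 (j1 x) = ((-1 : ℂ) ^ (m * (m + 1) / 2)) • x) ∧
      (∀ x, j0 (j1 x) = j1 (j0 x)) := by
  have hj1z : j1 0 = 0 := by
    have h := hadd1 0 0
    rw [add_zero] at h
    exact (left_eq_add.mp h)
  have hj0z : j0 0 = 0 := by
    have h := hadd0 0 0
    rw [add_zero] at h
    exact (left_eq_add.mp h)
  constructor
  · intro x
    have hx : x ∈ Submodule.span ℂ (Set.range (uTensor m)) := by
      rw [span_top]; trivial
    induction hx using Submodule.span_induction with
    | mem x hx =>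
      obtain ⟨ε, rfl⟩ := hx
      rw [hbasis1 ε, hconj1, hbasis1, flip_sum, conj_I_zpow, smul_smul]
      simp only [Bool.not_not]
      rw [coeff1]
    | zero => rw [hj1z, hj1z, smul_zero]
    | add x y _ _ hx hy => rw [hadd1, hadd1, hx, hy, smul_add]
    | smul c x _ hx =>
      rw [hconj1, hconj1, hx, Complex.conj_conj, smul_comm]
  · intro x
    have hx : x ∈ Submodule.span ℂ (Set.range (uTensor m)) := by
      rw [span_top]; trivial
    induction hx using Submodule.span_induction with
    | mem x hx =>
      obtain ⟨ε, rfl⟩ := hx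
      rw [hbasis1 ε, hconj0, hbasis0, flip_sum, conj_I_zpow, smul_smul,
        hbasis0 ε, hconj1, hbasis1, flip_sum, conj_I_zpow, smul_smul, mul_comm]
    | zero => rw [hj1z, hj0z, hj1z]
    | add x y _ _ hx hy => rw [hadd1, hadd0, hadd0, hadd1, hx, hy]
    | smul c x _ hx =>
      rw [hconj1, hconj0, hconj0, hconj1, hx]
end

section
/- The antilinear maps j₀ and j₁ on Δ = ℂ^{2^m} are anti-unitary: for all φ, ψ ∈ Δ, ⟨j₀ψ, j₀φ⟩ = ⟨φ, ψ⟩ and ⟨j₁ψ, j₁φ⟩ = ⟨φ, ψ⟩, where ⟨·,·⟩ is the standard Hermitian inner product. -/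
open Complex

lemma uVec_inner (b b' : Bool) :
    (∑ a : Fin 2, (starRingEnd ℂ) (uVec (if b then 1 else -1) a) * uVec (if b' then 1 else -1) a)
      = if b = b' then 1 else 0 := by
  have h2 : ((Real.sqrt 2 : ℂ))⁻¹ * ((Real.sqrt 2 : ℂ))⁻¹ = 2⁻¹ := by
    rw [← mul_inv]; norm_cast
    rw [Real.mul_self_sqrt (by norm_num)]; norm_num
  cases b <;> cases b' <;>
    simp [uVec, Fin.sum_univ_two, map_mul, map_inv₀, Complex.conj_ofReal, Complex.conj_I] <;>
    ring_nf <;>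
    simp [Complex.I_sq] <;> ring_nf <;>
    rw [show ((Real.sqrt 2:ℂ))⁻¹^2 = (√2:ℂ)⁻¹ * (√2:ℂ)⁻¹ by ring, h2] <;> norm_num

lemma uTensor_orthonormal (m : ℕ) : Orthonormal ℂ (uTensor m) := by
  rw [orthonormal_iff_ite]
  intro ε ε'
  have key : (inner ℂ (uTensor m ε) (uTensor m ε') : ℂ)
      = ∏ i : Fin m, (if ε i = ε' i then (1:ℂ) else 0) := by
    calc (inner ℂ (uTensor m ε) (uTensor m ε') : ℂ)
        = ∑ k : Fin m → Fin 2, ∏ i : Fin m,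
            ((starRingEnd ℂ) (uVec (if ε i then 1 else -1) (k i)) *
              uVec (if ε' i then 1 else -1) (k i)) := by
          simp only [PiLp.inner_apply, RCLike.inner_apply, uTensor, map_prod,
            Finset.prod_mul_distrib]
          exact Finset.sum_congr rfl fun _ _ => mul_comm _ _
      _ = ∏ i : Fin m, ∑ a : Fin 2,
            ((starRingEnd ℂ) (uVec (if ε i then 1 else -1) a) *
              uVec (if ε' i then 1 else -1) a) := by
          rw [Finset.prod_univ_sum, ← Fintype.piFinset_univ]
      _ = ∏ i : Fin m, (if ε i = ε' i then (1:ℂ) else 0) := by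
          refine Finset.prod_congr rfl fun i _ => ?_
          rw [← uVec_inner (ε i) (ε' i), Fin.sum_univ_two]
  rw [key]
  by_cases h : ε = ε'
  · simp [h]
  · obtain ⟨i, hi⟩ := Function.ne_iff.mp h
    rw [if_neg h]
    exact Finset.prod_eq_zero (Finset.mem_univ i) (if_neg hi)

lemma antiunitary_aux (m : ℕ)
    (j : EuclideanSpace ℂ (Fin m → Fin 2) → EuclideanSpace ℂ (Fin m → Fin 2))
    (hadd : ∀ x y, j (x + y) = j x + j y)
    (hconj : ∀ (c : ℂ) x, j (c • x) = (starRingEnd ℂ c) • j x)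
    (c : (Fin m → Bool) → ℂ)
    (hc : ∀ ε, (starRingEnd ℂ) (c ε) * c ε = 1)
    (hb : ∀ ε, j (uTensor m ε) = c ε • uTensor m (fun α => !(ε α))) :
    ∀ φ ψ : EuclideanSpace ℂ (Fin m → Fin 2),
      (inner ℂ (j ψ) (j φ) : ℂ) = inner ℂ φ ψ := by
  have hon := uTensor_orthonormal m
  have hinj : Function.Injective (fun (ε : Fin m → Bool) (α : Fin m) => !(ε α)) := by
    intro x y h
    funext α
    have := congrFun h α
    simp only at this
    cases hx : x α <;> cases hy : y α <;> simp_all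
  have hon' : Orthonormal ℂ (fun (ε : Fin m → Bool) => uTensor m (fun α => !(ε α))) :=
    hon.comp _ hinj
  have hcard : Fintype.card (Fin m → Bool) = Module.finrank ℂ (EuclideanSpace ℂ (Fin m → Fin 2)) := by
    simp [finrank_euclideanSpace, Fintype.card_fun]
  let b := basisOfLinearIndependentOfCardEqFinrank hon.linearIndependent hcard
  have hbcoe : ⇑b = uTensor m := coe_basisOfLinearIndependentOfCardEqFinrank _ _
  let J : EuclideanSpace ℂ (Fin m → Fin 2) →+ EuclideanSpace ℂ (Fin m → Fin 2) :=
    AddMonoidHom.mk' j hadd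
  have hJ : ∀ x, J x = j x := fun _ => rfl
  intro φ ψ
  have hrepr : ∀ x : EuclideanSpace ℂ (Fin m → Fin 2),
      x = ∑ ε : Fin m → Bool, b.repr x ε • uTensor m ε := by
    intro x
    conv_lhs => rw [← b.sum_repr x]
    simp [hbcoe]
  have hjx : ∀ x : EuclideanSpace ℂ (Fin m → Fin 2),
      j x = ∑ ε : Fin m → Bool,
        ((starRingEnd ℂ) (b.repr x ε) * c ε) • uTensor m (fun α => !(ε α)) := by
    intro x
    conv_lhs => rw [hrepr x, ← hJ, map_sum]
    refine Finset.sum_congr rfl fun ε _ => ?_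
    rw [hJ, hconj, hb, smul_smul]
  have hR : (inner ℂ φ ψ : ℂ) = ∑ ε : Fin m → Bool,
      (starRingEnd ℂ) (b.repr φ ε) * b.repr ψ ε := by
    conv_lhs => rw [hrepr φ, hrepr ψ]
    exact hon.inner_sum _ _ _
  rw [hjx φ, hjx ψ, hon'.inner_sum, hR]
  refine Finset.sum_congr rfl fun ε _ => ?_
  have h1 := hc ε
  simp only [map_mul, Complex.conj_conj]
  calc b.repr ψ ε * (starRingEnd ℂ) (c ε) * ((starRingEnd ℂ) (b.repr φ ε) * c ε)
      = (starRingEnd ℂ) (b.repr φ ε) * b.repr ψ ε * ((starRingEnd ℂ) (c ε) * c ε) := by ring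
    _ = (starRingEnd ℂ) (b.repr φ ε) * b.repr ψ ε := by rw [h1, mul_one]

/-- The antilinear maps `j₀` and `j₁` are anti-unitary:
`⟨jψ, jφ⟩ = ⟨φ, ψ⟩` for the standard Hermitian inner product on `ℂ^{2^m}`. -/
theorem j0_j1_antiunitary (m : ℕ) (hm : 1 ≤ m)
    (j0 j1 : EuclideanSpace ℂ (Fin m → Fin 2) → EuclideanSpace ℂ (Fin m → Fin 2))
    (hadd0 : ∀ x y, j0 (x + y) = j0 x + j0 y)
    (hconj0 : ∀ (c : ℂ) x, j0 (c • x) = (starRingEnd ℂ c) • j0 x)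
    (hbasis0 : ∀ ε : Fin m → Bool,
      j0 (uTensor m ε) =
        (Complex.I ^ (∑ α : Fin m, ((α : ℤ) + 1) * (if ε α then 1 else -1))) •
          uTensor m (fun α => !(ε α)))
    (hadd1 : ∀ x y, j1 (x + y) = j1 x + j1 y)
    (hconj1 : ∀ (c : ℂ) x, j1 (c • x) = (starRingEnd ℂ c) • j1 x)
    (hbasis1 : ∀ ε : Fin m → Bool,
      j1 (uTensor m ε) =
        (Complex.I ^ (∑ α : Fin m, ((m : ℤ) - (α : ℤ)) * (if ε α then 1 else -1))) •
          uTensor m (fun α => !(ε α))) :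
    ∀ φ ψ : EuclideanSpace ℂ (Fin m → Fin 2),
      (inner ℂ (j0 ψ) (j0 φ) : ℂ) = inner ℂ φ ψ ∧
      (inner ℂ (j1 ψ) (j1 φ) : ℂ) = inner ℂ φ ψ := by
  have hc : ∀ n : ℤ, (starRingEnd ℂ) (Complex.I ^ n) * Complex.I ^ n = 1 := by
    intro n
    rw [map_zpow₀, Complex.conj_I, ← mul_zpow]
    simp
  intro φ ψ
  exact ⟨antiunitary_aux m j0 hadd0 hconj0 _ (fun ε => hc _) hbasis0 φ ψ,
    antiunitary_aux m j1 hadd1 hconj1 _ (fun ε => hc _) hbasis1 φ ψ⟩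
end

section
/- Let A : H₁ → H₁ and B : H₂ → H₂ be self-adjoint operators on complex Hilbert spaces, each diagonalizable by an orthonormal basis of eigenvectors. Let Γ_ρ(A) and Γ_ν(B) denote the eigenspaces for eigenvalues ρ and ν. Then on the Hilbert tensor product H₁ ⊗ H₂, the eigenspace of A ⊗ Id + Id ⊗ B for eigenvalue γ equals the closure of the direct sum, over all pairs (χ, ν) with χ + ν = γ, of Γ_χ(A) ⊗ Γ_ν(B). -/
/-- Eigenspace decomposition of `A ⊗ Id + Id ⊗ B` on the Hilbert tensor product:
the eigenspace for eigenvalue `γ` is the closure of the sum, over pairs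
`(χ, ν)` with `χ + ν = γ`, of the spans of tensors of eigenvectors. -/
theorem eigenspace_of_tensor_sum {H₁ H₂ H : Type*}
    [NormedAddCommGroup H₁] [InnerProductSpace ℂ H₁] [CompleteSpace H₁]
    [NormedAddCommGroup H₂] [InnerProductSpace ℂ H₂] [CompleteSpace H₂]
    [NormedAddCommGroup H] [InnerProductSpace ℂ H] [CompleteSpace H]
    (t : H₁ →ₗ[ℂ] H₂ →ₗ[ℂ] H)
    (hinner : ∀ (x₁ y₁ : H₁) (x₂ y₂ : H₂),
      (inner ℂ (t x₁ x₂) (t y₁ y₂) : ℂ) = inner ℂ x₁ y₁ * inner ℂ x₂ y₂)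
    (hdense : (Submodule.span ℂ {z : H | ∃ x₁ x₂, z = t x₁ x₂}).topologicalClosure = ⊤)
    (A : H₁ →ₗ[ℂ] H₁) (B : H₂ →ₗ[ℂ] H₂)
    (hsymA : ∀ x y : H₁, (inner ℂ (A x) y : ℂ) = inner ℂ x (A y))
    (hsymB : ∀ x y : H₂, (inner ℂ (B x) y : ℂ) = inner ℂ x (B y))
    (hA : (⨆ ρ : ℂ, Module.End.eigenspace A ρ).topologicalClosure = ⊤)
    (hB : (⨆ ν : ℂ, Module.End.eigenspace B ν).topologicalClosure = ⊤)
    (T : H →L[ℂ] H)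
    (hT : ∀ (x : H₁) (y : H₂), T (t x y) = t (A x) y + t x (B y)) :
    ∀ γ : ℂ,
      Module.End.eigenspace (T : H →ₗ[ℂ] H) γ =
        (⨆ p : ℂ × ℂ, ⨆ _ : p.1 + p.2 = γ,
          Submodule.span ℂ {z : H | ∃ x ∈ Module.End.eigenspace A p.1,
            ∃ y ∈ Module.End.eigenspace B p.2, z = t x y}).topologicalClosure := by
  -- the norm of an elementary tensor
  have hnorm : ∀ (x : H₁) (y : H₂), ‖t x y‖ = ‖x‖ * ‖y‖ := by
    intro x y
    have h := hinner x x y y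
    rw [inner_self_eq_norm_sq_to_K, inner_self_eq_norm_sq_to_K,
      inner_self_eq_norm_sq_to_K] at h
    have h3 : ‖t x y‖ ^ 2 = (‖x‖ * ‖y‖) ^ 2 := by
      have h2 : ‖t x y‖ ^ 2 = ‖x‖ ^ 2 * ‖y‖ ^ 2 := by exact_mod_cast h
      rw [h2]; ring
    have h4 := congrArg Real.sqrt h3
    rwa [Real.sqrt_sq (norm_nonneg _),
      Real.sqrt_sq (mul_nonneg (norm_nonneg _) (norm_nonneg _))] at h4
  -- continuity of `t` in each variable
  have tcont1 : ∀ y : H₂, Continuous fun x : H₁ => t x y := by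
    intro y
    exact (LinearMap.mkContinuous (LinearMap.flip t y) ‖y‖
      (fun x => by simp only [LinearMap.flip_apply]; rw [hnorm]; exact le_of_eq (mul_comm _ _))).continuous
  have tcont2 : ∀ x : H₁, Continuous fun y : H₂ => t x y :=
    fun x => (LinearMap.mkContinuous (t x) ‖x‖ (fun y => le_of_eq (hnorm x y))).continuous
  -- set-closures from topological closures
  have hSAc : closure ((⨆ ρ : ℂ, Module.End.eigenspace A ρ : Submodule ℂ H₁) : Set H₁)
      = Set.univ := by
    rw [← Submodule.topologicalClosure_coe, hA, Submodule.top_coe]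
  have hSBc : closure ((⨆ ν : ℂ, Module.End.eigenspace B ν : Submodule ℂ H₂) : Set H₂)
      = Set.univ := by
    rw [← Submodule.topologicalClosure_coe, hB, Submodule.top_coe]
  have hS0c : closure ((Submodule.span ℂ {z : H | ∃ x₁ x₂, z = t x₁ x₂} : Submodule ℂ H) : Set H)
      = Set.univ := by
    rw [← Submodule.topologicalClosure_coe, hdense, Submodule.top_coe]
  -- the span of all eigen-elementary tensors
  set D : Submodule ℂ H := Submodule.span ℂ {z : H | ∃ χ ν : ℂ, ∃ x ∈ Module.End.eigenspace A χ,
    ∃ y ∈ Module.End.eigenspace B ν, z = t x y} with hD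
  have hDmem : ∀ x ∈ (⨆ ρ : ℂ, Module.End.eigenspace A ρ),
      ∀ y ∈ (⨆ ν : ℂ, Module.End.eigenspace B ν), t x y ∈ D := by
    intro x hx
    refine Submodule.iSup_induction (motive := fun x => ∀ y ∈ (⨆ ν : ℂ, Module.End.eigenspace B ν),
      t x y ∈ D) _ hx (fun χ x hxχ => ?_) (by intro y _; simp) ?_
    · intro y hy
      refine Submodule.iSup_induction (motive := fun y => t x y ∈ D) _ hy (fun ν y hyν => ?_)
        (by simp) ?_
      · exact Submodule.subset_span ⟨χ, ν, x, hxχ, y, hyν, rfl⟩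
      · intro y₁ y₂ h1 h2
        rw [map_add]
        exact D.add_mem h1 h2
    · intro x₁ x₂ h1 h2 y hy
      have : t (x₁ + x₂) y = t x₁ y + t x₂ y := by rw [map_add]; rfl
      rw [this]
      exact D.add_mem (h1 y hy) (h2 y hy)
  -- every elementary tensor is in the closure of D
  have hmemDc : ∀ (x : H₁) (y : H₂), t x y ∈ D.topologicalClosure := by
    have step1 : ∀ (x : H₁), ∀ y ∈ (⨆ ν : ℂ, Module.End.eigenspace B ν),
        t x y ∈ D.topologicalClosure := by
      intro x y hy
      have hcl : IsClosed ((fun x' : H₁ => t x' y) ⁻¹' (D.topologicalClosure : Set H)) :=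
        D.isClosed_topologicalClosure.preimage (tcont1 y)
      have hsub : ((⨆ ρ : ℂ, Module.End.eigenspace A ρ : Submodule ℂ H₁) : Set H₁) ⊆
          (fun x' : H₁ => t x' y) ⁻¹' (D.topologicalClosure : Set H) :=
        fun x' hx' => Submodule.le_topologicalClosure _ (hDmem x' hx' y hy)
      exact hcl.closure_subset_iff.mpr hsub (hSAc ▸ Set.mem_univ x)
    intro x y
    have hcl : IsClosed ((fun y' : H₂ => t x y') ⁻¹' (D.topologicalClosure : Set H)) :=
      D.isClosed_topologicalClosure.preimage (tcont2 x)
    have hsub : ((⨆ ν : ℂ, Module.End.eigenspace B ν : Submodule ℂ H₂) : Set H₂) ⊆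
        (fun y' : H₂ => t x y') ⁻¹' (D.topologicalClosure : Set H) :=
      fun y' hy' => step1 x y' hy'
    exact hcl.closure_subset_iff.mpr hsub (hSBc ▸ Set.mem_univ y)
  have hDc : closure (D : Set H) = Set.univ := by
    have h1 : Submodule.span ℂ {z : H | ∃ x₁ x₂, z = t x₁ x₂} ≤ D.topologicalClosure := by
      rw [Submodule.span_le]
      rintro z ⟨x₁, x₂, rfl⟩
      exact hmemDc x₁ x₂
    have h2 : (Submodule.span ℂ {z : H | ∃ x₁ x₂, z = t x₁ x₂}).topologicalClosure ≤
        D.topologicalClosure :=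
      Submodule.topologicalClosure_minimal _ h1 D.isClosed_topologicalClosure
    rw [hdense] at h2
    have : D.topologicalClosure = ⊤ := top_unique h2
    rw [← Submodule.topologicalClosure_coe, this, Submodule.top_coe]
  -- T is symmetric
  have hTsym : (T : H →ₗ[ℂ] H).IsSymmetric := by
    have elem : ∀ (x x' : H₁) (y y' : H₂),
        (inner ℂ (T (t x y)) (t x' y') : ℂ) = inner ℂ (t x y) (T (t x' y')) := by
      intro x x' y y'
      rw [hT, hT, inner_add_left, inner_add_right, hinner, hinner, hinner, hinner,
        hsymA, hsymB]
    have sp1 : ∀ u ∈ Submodule.span ℂ {z : H | ∃ x₁ x₂, z = t x₁ x₂},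
        ∀ w ∈ Submodule.span ℂ {z : H | ∃ x₁ x₂, z = t x₁ x₂},
        (inner ℂ (T u) w : ℂ) = inner ℂ u (T w) := by
      intro u hu w hw
      refine Submodule.span_induction₂
        (p := fun u w _ _ => (inner ℂ (T u) w : ℂ) = inner ℂ u (T w)) ?_ ?_ ?_ ?_ ?_ ?_ ?_ hu hw
      · rintro z z' ⟨x, y, rfl⟩ ⟨x', y', rfl⟩
        exact elem x x' y y'
      · intro w _; simp
      · intro u _; simp
      · intro a b c _ _ _ h1 h2
        rw [map_add, inner_add_left, inner_add_left, h1, h2]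
      · intro a b c _ _ _ h1 h2
        rw [map_add, inner_add_right, inner_add_right, h1, h2]
      · intro r a b _ _ h
        rw [map_smul, inner_smul_left, inner_smul_left, h]
      · intro r a b _ _ h
        rw [map_smul, inner_smul_right, inner_smul_right, h]
    have ext1 : ∀ u ∈ Submodule.span ℂ {z : H | ∃ x₁ x₂, z = t x₁ x₂},
        ∀ w : H, (inner ℂ (T u) w : ℂ) = inner ℂ u (T w) := by
      intro u hu w
      have hcl : IsClosed {w' : H | (inner ℂ (T u) w' : ℂ) = inner ℂ u (T w')} :=
        isClosed_eq (continuous_const.inner continuous_id)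
          (continuous_const.inner T.continuous)
      have hsub : ((Submodule.span ℂ {z : H | ∃ x₁ x₂, z = t x₁ x₂} : Submodule ℂ H) : Set H) ⊆
          {w' : H | (inner ℂ (T u) w' : ℂ) = inner ℂ u (T w')} :=
        fun w' hw' => sp1 u hu w' hw'
      exact hcl.closure_subset_iff.mpr hsub (hS0c ▸ Set.mem_univ w)
    intro u w
    have hcl : IsClosed {u' : H | (inner ℂ (T u') w : ℂ) = inner ℂ u' (T w)} :=
      isClosed_eq (T.continuous.inner continuous_const)
        (continuous_id.inner continuous_const)
    have hsub : ((Submodule.span ℂ {z : H | ∃ x₁ x₂, z = t x₁ x₂} : Submodule ℂ H) : Set H) ⊆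
        {u' : H | (inner ℂ (T u') w : ℂ) = inner ℂ u' (T w)} :=
      fun u' hu' => ext1 u' hu' w
    exact hcl.closure_subset_iff.mpr hsub (hS0c ▸ Set.mem_univ u)
  -- elementary eigen tensors are eigenvectors of T
  have hgen : ∀ (χ ν : ℂ) (x : H₁) (y : H₂), x ∈ Module.End.eigenspace A χ →
      y ∈ Module.End.eigenspace B ν →
      t x y ∈ Module.End.eigenspace (T : H →ₗ[ℂ] H) (χ + ν) := by
    intro χ ν x y hx hy
    rw [Module.End.mem_eigenspace_iff] at hx hy ⊢
    show T (t x y) = (χ + ν) • t x y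
    rw [hT, hx, hy, map_smul, map_smul, add_smul]
    rfl
  intro γ
  set K : Submodule ℂ H := ⨆ p : ℂ × ℂ, ⨆ _ : p.1 + p.2 = γ,
    Submodule.span ℂ {z : H | ∃ x ∈ Module.End.eigenspace A p.1,
      ∃ y ∈ Module.End.eigenspace B p.2, z = t x y} with hKdef
  have heigclosed : IsClosed ((Module.End.eigenspace (T : H →ₗ[ℂ] H) γ : Submodule ℂ H) : Set H) := by
    have hset : ((Module.End.eigenspace (T : H →ₗ[ℂ] H) γ : Submodule ℂ H) : Set H)
        = {z : H | T z = γ • z} := by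
      ext z
      simp [Module.End.mem_eigenspace_iff]
    rw [hset]
    exact isClosed_eq T.continuous (continuous_id.const_smul γ)
  have hKle : K ≤ Module.End.eigenspace (T : H →ₗ[ℂ] H) γ := by
    refine iSup_le fun p => iSup_le fun hp => Submodule.span_le.2 ?_
    rintro z ⟨x, hx, y, hy, rfl⟩
    exact hp ▸ hgen p.1 p.2 x y hx hy
  have hKcle : K.topologicalClosure ≤ Module.End.eigenspace (T : H →ₗ[ℂ] H) γ :=
    Submodule.topologicalClosure_minimal _ hKle heigclosed
  refine le_antisymm ?_ hKcle
  intro v hv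
  haveI : CompleteSpace K.topologicalClosure :=
    K.isClosed_topologicalClosure.completeSpace_coe
  set w : H := v - (K.topologicalClosure.orthogonalProjectionOnto v : H) with hwdef
  have hwK : w ∈ K.topologicalClosureᗮ := Submodule.sub_starProjection_mem_orthogonal (K := K.topologicalClosure) v
  have hPv : ((K.topologicalClosure.orthogonalProjectionOnto v : H)) ∈
      Module.End.eigenspace (T : H →ₗ[ℂ] H) γ :=
    hKcle (K.topologicalClosure.orthogonalProjectionOnto v).2
  have hweig : w ∈ Module.End.eigenspace (T : H →ₗ[ℂ] H) γ :=
    Submodule.sub_mem _ hv hPv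
  -- w is orthogonal to D
  have hwD : ∀ u ∈ D, (inner ℂ u w : ℂ) = 0 := by
    intro u hu
    rw [hD] at hu
    refine Submodule.span_induction (p := fun u _ => (inner ℂ u w : ℂ) = 0) ?_ ?_ ?_ ?_ hu
    · rintro z ⟨χ, ν, x, hx, y, hy, rfl⟩
      by_cases hsum : χ + ν = γ
      · have hzK : t x y ∈ K.topologicalClosure := by
          apply Submodule.le_topologicalClosure
          exact Submodule.mem_iSup_of_mem (χ, ν)
            (Submodule.mem_iSup_of_mem hsum (Submodule.subset_span ⟨x, hx, y, hy, rfl⟩))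
        exact (Submodule.mem_orthogonal _ w).mp hwK _ hzK
      · exact hTsym.orthogonalFamily_eigenspaces hsum ⟨t x y, hgen χ ν x y hx hy⟩ ⟨w, hweig⟩
    · exact inner_zero_left w
    · intro a b _ _ ha hb
      rw [inner_add_left, ha, hb, add_zero]
    · intro c a _ ha
      rw [inner_smul_left, ha, mul_zero]
  have hw0 : w = 0 := by
    have hwall : (inner ℂ w w : ℂ) = 0 := by
      have hcl : IsClosed {u' : H | (inner ℂ u' w : ℂ) = 0} :=
        isClosed_eq (continuous_id.inner continuous_const) continuous_const
      have hsub : (D : Set H) ⊆ {u' : H | (inner ℂ u' w : ℂ) = 0} := fun u' hu' => hwD u' hu'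
      exact hcl.closure_subset_iff.mpr hsub (hDc ▸ Set.mem_univ w)
    exact inner_self_eq_zero.mp hwall
  have : v = (K.topologicalClosure.orthogonalProjectionOnto v : H) := by
    have := sub_eq_zero.mp (hwdef ▸ hw0)
    exact this
  exact this ▸ (K.topologicalClosure.orthogonalProjectionOnto v).2
end
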